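/- Let Φ' be the two-group (interchangeable-robot) version of the MPP instance reduced from a 3SAT instance (X, C) with n variables and m clauses (as described in the context). In any solution of Φ' with makespan m+2, and likewise in any solution of Φ' with total arrival time (n+m)(m+2), the clause robot starting at v_{c_j} ends at the goal vertex v_{c_j}^g for every 1 ≤ j ≤ m, and each such robot takes exactly m+2 time steps to reach v_{c_j}^g; in particular, minimum-time solutions of the two-group instance induce the same robot-to-goal correspondence as in the fully labeled instance. -/
import Mathlib


/-!
Formalization of multi-robot path planning on graphs (MPP).

An MPP instance consists of a connected simple graph `G` on a vertex type `V`,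
a finite set of robots (an index type `R`), and injective start/goal
configurations `xI xG : R → V`.  A scheduled path is a map `ℕ → V`.
-/

namespace MPPFormal

variable {V R : Type}

/-- The arrival time of a path `p` with goal `g`: the smallest time `t`
with `p t = g`. -/
noncomputable def arrivalTime (g : V) (p : ℕ → V) : ℕ := sInf {t | p t = g}

/-- A feasible scheduled path from `s` to `g` in the graph `G`:
it starts at `s`, reaches `g` at some time, stays at `g` forever after the
first time it reaches `g`, and at every time step it either traverses an
edge of `G` or stays put. -/
def FeasiblePath (G : SimpleGraph V) (s g : V) (p : ℕ → V) : Prop :=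
  p 0 = s ∧ (∃ t, p t = g) ∧ (∀ t, arrivalTime g p ≤ t → p t = g) ∧
    ∀ t, G.Adj (p t) (p (t + 1)) ∨ p t = p (t + 1)

/-- Two scheduled paths collide if they meet at the same vertex at the same
time, or if they swap along an edge head-on. -/
def Collide (p q : ℕ → V) : Prop :=
  (∃ t, p t = q t) ∨ ∃ t, p t = q (t + 1) ∧ p (t + 1) = q t ∧ p t ≠ p (t + 1)

/-- The length of a scheduled path: the number of time steps at which it
actually moves. -/
noncomputable def pathLen (p : ℕ → V) : ℕ := Set.ncard {t | p t ≠ p (t + 1)}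

/-- A solution to the MPP instance `(G, R, xI, xG)`: a family of pairwise
non-colliding feasible paths, one per robot. -/
def IsSolution (G : SimpleGraph V) (xI xG : R → V) (p : R → ℕ → V) : Prop :=
  (∀ i, FeasiblePath G (xI i) (xG i) (p i)) ∧
    Pairwise fun i j => ¬ Collide (p i) (p j)

/-- `(G, xI, xG)` together with the robot index type `R` forms an MPP
instance: the graph is connected and the start and goal configurations are
injective. -/
def IsMPPInstance (G : SimpleGraph V) (xI xG : R → V) : Prop :=
  G.Connected ∧ Function.Injective xI ∧ Function.Injective xG

variable [Fintype R]

/-- Total arrival time of a solution. -/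
noncomputable def totalTime (xG : R → V) (p : R → ℕ → V) : ℕ :=
  ∑ i, arrivalTime (xG i) (p i)

/-- Makespan (last arrival time) of a solution. -/
noncomputable def makespan (xG : R → V) (p : R → ℕ → V) : ℕ :=
  Finset.univ.sup fun i => arrivalTime (xG i) (p i)

/-- Total distance traveled in a solution. -/
noncomputable def totalDist (p : R → ℕ → V) : ℕ := ∑ i, pathLen (p i)

/-- Maximum single-robot distance of a solution. -/
noncomputable def maxDist (p : R → ℕ → V) : ℕ :=
  Finset.univ.sup fun i => pathLen (p i)

/-- Minimum total arrival time over all solutions. -/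
noncomputable def minTotalTime (G : SimpleGraph V) (xI xG : R → V) : ℕ :=
  sInf {c | ∃ p, IsSolution G xI xG p ∧ totalTime xG p = c}

/-- Minimum makespan over all solutions. -/
noncomputable def minMakespan (G : SimpleGraph V) (xI xG : R → V) : ℕ :=
  sInf {c | ∃ p, IsSolution G xI xG p ∧ makespan xG p = c}

/-- Minimum total distance over all solutions. -/
noncomputable def minTotalDist (G : SimpleGraph V) (xI xG : R → V) : ℕ :=
  sInf {c | ∃ p, IsSolution G xI xG p ∧ totalDist p = c}

/-- Minimum maximum distance over all solutions. -/
noncomputable def minMaxDist (G : SimpleGraph V) (xI xG : R → V) : ℕ :=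
  sInf {c | ∃ p, IsSolution G xI xG p ∧ maxDist p = c}

end MPPFormal

/-!
The reduction from 3SAT to MPP.

A 3SAT instance over `n` variables with `m` clauses assigns to each clause
`j : Fin m` three literals; a literal is a pair `(i, b) : Fin n × Bool`,
`b = true` meaning the non-negated variable `x_i` and `b = false` the
negated literal `¬ x_i`.  The three literals of each clause involve three
distinct variables.
-/

namespace MPPFormal

/-- A 3SAT instance with variables `x_1, …, x_n` and clauses `c_1, …, c_m`. -/
structure ThreeSat (n m : ℕ) where
  lit : Fin m → Fin 3 → Fin n × Bool
  distinctVars : ∀ j (k k' : Fin 3), k ≠ k' → (lit j k).1 ≠ (lit j k').1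

/-- An assignment `a` satisfies the instance if every clause contains a true
literal. -/
def ThreeSat.SatisfiedBy {n m : ℕ} (sat : ThreeSat n m) (a : Fin n → Bool) : Prop :=
  ∀ j, ∃ k, a (sat.lit j k).1 = (sat.lit j k).2

/-- Satisfiability of a 3SAT instance. -/
def ThreeSat.Satisfiable {n m : ℕ} (sat : ThreeSat n m) : Prop :=
  ∃ a, sat.SatisfiedBy a

/-- Vertices of the MPP instance `Φ` reduced from a 3SAT instance with `n`
variables and `m` clauses:
* `vx i` is the left endpoint `v_{x_i}` of the `i`-th variable strip (start of
  the variable robot `r_{x_i}`);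
* `vxg i` is the right endpoint `v_{x_i}^g` (goal of `r_{x_i}`);
* `mid i side k` is the interior vertex of the `i`-th upper (`side = true`)
  or lower (`side = false`) path lying at distance `k + 1` from `vx i`
  (each of the two paths has length `m + 2`, hence `m + 1` interior
  vertices, `k : Fin (m+1)`);
* `vc j` is the start vertex `v_{c_j}` of the clause robot `r_{c_j}`;
* `vcg j` is its goal vertex `v_{c_j}^g`. -/
inductive PhiV (n m : ℕ) where
  | vx (i : Fin n)
  | vxg (i : Fin n)
  | mid (i : Fin n) (side : Bool) (k : Fin (m + 1))
  | vc (j : Fin m)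
  | vcg (j : Fin m)
deriving DecidableEq

/-- Base relation generating the edges of `Φ`:
the two length-`(m+2)` paths of each variable strip; an edge from `v_{c_j}`
to the vertex at distance `j + 1` (`1`-indexed: distance `j`) from `v_{x_i}`
on the upper (resp. lower) path of `x_i` for each non-negated (resp. negated)
literal of `c_j`; the path `v_{c_1}^g - ⋯ - v_{c_m}^g`; and edges from
`v_{c_m}^g` to every `v_{x_i}`. -/
def phiRel {n m : ℕ} (sat : ThreeSat n m) : PhiV n m → PhiV n m → Prop
  | PhiV.vx i, PhiV.mid i' _ k => i = i' ∧ (k : ℕ) = 0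
  | PhiV.mid i s k, PhiV.mid i' s' k' => i = i' ∧ s = s' ∧ (k' : ℕ) = (k : ℕ) + 1
  | PhiV.mid i _ k, PhiV.vxg i' => i = i' ∧ (k : ℕ) = m
  | PhiV.vc j, PhiV.mid i s k => (∃ l, sat.lit j l = (i, s)) ∧ (k : ℕ) = (j : ℕ)
  | PhiV.vcg j, PhiV.vcg j' => (j' : ℕ) = (j : ℕ) + 1
  | PhiV.vcg j, PhiV.vx _ => (j : ℕ) + 1 = m
  | _, _ => False

/-- The graph of the reduced MPP instance `Φ`. -/
def phiGraph {n m : ℕ} (sat : ThreeSat n m) : SimpleGraph (PhiV n m) :=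
  SimpleGraph.fromRel (phiRel sat)

/-- Start configuration of `Φ`: the variable robot `r_{x_i}` (index
`Sum.inl i`) starts at `v_{x_i}`; the clause robot `r_{c_j}` (index
`Sum.inr j`) starts at `v_{c_j}`. -/
def phiStart {n m : ℕ} : Fin n ⊕ Fin m → PhiV n m :=
  Sum.elim PhiV.vx PhiV.vc

/-- Goal configuration of `Φ`: `r_{x_i}` must reach `v_{x_i}^g` and `r_{c_j}`
must reach `v_{c_j}^g`. -/
def phiGoal {n m : ℕ} : Fin n ⊕ Fin m → PhiV n m :=
  Sum.elim PhiV.vxg PhiV.vcg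

end MPPFormal

namespace MPPFormal

/-- A solution of the two-group (interchangeable-robot) version `Φ'` of the
reduced instance: the variable robots form one group with goal set
`{v_{x_1}^g, …, v_{x_n}^g}` and the clause robots form another group with
goal set `{v_{c_1}^g, …, v_{c_m}^g}`.  `g` records the final goal vertex of
each robot: within each group the robots occupy all goal vertices of the
group, i.e. `g` is given by permutations of the two groups' goal sets, and
`p` is an ordinary (collision-free, feasible) solution for the goal
configuration `g`. -/
def TwoGroupSolution {n m : ℕ} (sat : ThreeSat n m)
    (p : Fin n ⊕ Fin m → ℕ → PhiV n m) (g : Fin n ⊕ Fin m → PhiV n m) : Prop :=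
  (∃ (φ : Equiv.Perm (Fin n)) (ψ : Equiv.Perm (Fin m)),
      g = Sum.elim (fun i => PhiV.vxg (φ i)) fun j => PhiV.vcg (ψ j)) ∧
    IsSolution (phiGraph sat) phiStart g p

end MPPFormal

namespace MPPFormal

/-- Potential function on the vertices of `Φ`: adjacent vertices differ by
exactly one, so it lower-bounds travel times. -/
private def pot {n m : ℕ} : PhiV n m → ℕ
  | .vx _ => m
  | .vxg _ => 2 * m + 2
  | .mid _ _ k => m + 1 + (k : ℕ)
  | .vc j => m + 2 + (j : ℕ)
  | .vcg j => (j : ℕ)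

private lemma pot_rel {n m : ℕ} (sat : ThreeSat n m) :
    ∀ {u v : PhiV n m}, phiRel sat u v → pot u ≤ pot v + 1 ∧ pot v ≤ pot u + 1 := by
  intro u v h
  cases u <;> cases v <;>
    simp only [phiRel, pot] at h ⊢ <;>
    first
      | exact h.elim
      | omega
      | (obtain ⟨h1, h2⟩ := h; omega)
      | (obtain ⟨h1, h2, h3⟩ := h; omega)

private lemma pot_adj {n m : ℕ} (sat : ThreeSat n m) {u v : PhiV n m}
    (h : (phiGraph sat).Adj u v) : pot u ≤ pot v + 1 ∧ pot v ≤ pot u + 1 := by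
  rw [phiGraph, SimpleGraph.fromRel_adj] at h
  rcases h.2 with h | h
  · exact pot_rel sat h
  · exact (pot_rel sat h).symm

private lemma pot_path {n m : ℕ} (sat : ThreeSat n m) {s g : PhiV n m} {q : ℕ → PhiV n m}
    (hq : FeasiblePath (phiGraph sat) s g q) :
    ∀ t, pot (q t) ≤ pot (q 0) + t ∧ pot (q 0) ≤ pot (q t) + t := by
  intro t
  induction t with
  | zero => omega
  | succ t ih =>
    rcases hq.2.2.2 t with h | h
    · have := pot_adj sat h; omega
    · rw [← h]; omega

private lemma arrival_mem {V : Type} {g : V} {q : ℕ → V} (h : ∃ t, q t = g) :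
    q (arrivalTime g q) = g := Nat.sInf_mem h

private lemma arrival_le {V : Type} {g : V} {q : ℕ → V} {t : ℕ} (h : q t = g) :
    arrivalTime g q ≤ t := Nat.sInf_le h

/-- Neighbours of `vcg k` for `k + 1 < m` are exactly `vcg (k-1)` and `vcg (k+1)`. -/
private lemma adj_vcg {n m : ℕ} (sat : ThreeSat n m) {w : PhiV n m} {k : Fin m}
    (hk : (k : ℕ) + 1 < m) (h : (phiGraph sat).Adj w (PhiV.vcg k)) :
    ∃ k' : Fin m, w = PhiV.vcg k' ∧ ((k' : ℕ) + 1 = (k : ℕ) ∨ (k' : ℕ) = (k : ℕ) + 1) := by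
  rw [phiGraph, SimpleGraph.fromRel_adj] at h
  obtain ⟨hne, h | h⟩ := h
  · cases w <;> simp only [phiRel] at h
    case vcg j => exact ⟨j, rfl, Or.inl h.symm⟩
  · cases w <;> simp only [phiRel] at h
    case vx i => omega
    case vcg j => exact ⟨j, rfl, Or.inr h⟩

/-- A feasible path starting at a clause vertex can only enter the set
`{vcg k'' : k'' < k}` through `vcg k`. -/
private lemma chain_enter {n m : ℕ} (sat : ThreeSat n m) {q : ℕ → PhiV n m} {j0 : Fin m}
    (h0 : q 0 = PhiV.vc j0)
    (hstep : ∀ t, (phiGraph sat).Adj (q t) (q (t + 1)) ∨ q t = q (t + 1)) (k : Fin m) :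
    ∀ t (k'' : Fin m), (k'' : ℕ) < (k : ℕ) → q t = PhiV.vcg k'' →
      ∃ s < t, q s = PhiV.vcg k := by
  intro t
  induction t with
  | zero => intro k'' hlt h; rw [h0] at h; simp at h
  | succ t ih =>
    intro k'' hlt h
    rcases hstep t with ha | he
    · rw [h] at ha
      have hkm : (k : ℕ) < m := k.isLt
      have hk'' : (k'' : ℕ) + 1 < m := by omega
      obtain ⟨k', hw, hcase⟩ := adj_vcg sat hk'' ha
      by_cases hkj : (k' : ℕ) = (k : ℕ)
      · exact ⟨t, Nat.lt_succ_self t, by rw [hw]; congr 1; exact Fin.ext hkj⟩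
      · have hlt' : (k' : ℕ) < (k : ℕ) := by omega
        obtain ⟨s, hs, hqs⟩ := ih k' hlt' hw
        exact ⟨s, by omega, hqs⟩
    · obtain ⟨s, hs, hqs⟩ := ih k'' hlt (he.trans h)
      exact ⟨s, by omega, hqs⟩

/-- The ordering constraint along the goal chain: the robot destined for
`vcg k` must clear `vcg (k+1)` before the robot destined for `vcg (k+1)`
settles, hence arrives no later. -/
private lemma chain_step {n m : ℕ} (sat : ThreeSat n m) {q q' : ℕ → PhiV n m}
    {j j' k k' : Fin m}
    (hq : FeasiblePath (phiGraph sat) (PhiV.vc j) (PhiV.vcg k) q)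
    (hq' : FeasiblePath (phiGraph sat) (PhiV.vc j') (PhiV.vcg k') q')
    (hkk' : (k' : ℕ) = (k : ℕ) + 1) (hnc : ¬ Collide q q') :
    arrivalTime (PhiV.vcg k) q ≤ arrivalTime (PhiV.vcg k') q' := by
  set A := arrivalTime (PhiV.vcg k) q with hAdef
  have hqA : q A = PhiV.vcg k := arrival_mem hq.2.1
  have hA0 : A ≠ 0 := by
    intro h
    rw [h, hq.1] at hqA
    simp at hqA
  have hpred : A - 1 + 1 = A := by omega
  have hne : q (A - 1) ≠ PhiV.vcg k := by
    intro h
    have := arrival_le h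
    omega
  have hadj : (phiGraph sat).Adj (q (A - 1)) (q A) ∨ q (A - 1) = q A := by
    have := hq.2.2.2 (A - 1); rwa [hpred] at this
  rcases hadj with hadj | heq
  · rw [hqA] at hadj
    have hklt : (k : ℕ) + 1 < m := by rw [← hkk']; exact k'.isLt
    obtain ⟨k2, hw, hcase⟩ := adj_vcg sat hklt hadj
    rcases hcase with h1 | h2
    · have h2' : (k2 : ℕ) < (k : ℕ) := by omega
      obtain ⟨s, hs, hqs⟩ := chain_enter sat hq.1 hq.2.2.2 k (A - 1) k2 h2' hw
      have := arrival_le hqs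
      omega
    · have hk2 : k2 = k' := Fin.ext (by omega)
      rw [hk2] at hw
      by_contra hle
      push_neg at hle
      have hq'at : q' (A - 1) = PhiV.vcg k' := hq'.2.2.1 (A - 1) (by omega)
      exact hnc (Or.inl ⟨A - 1, by rw [hw, hq'at]⟩)
  · rw [hqA] at heq
    exact absurd heq hne

private lemma mono_of_step {m : ℕ} (a : Fin m → ℕ)
    (hs : ∀ (kv : ℕ) (h : kv + 1 < m), a ⟨kv, by omega⟩ ≤ a ⟨kv + 1, h⟩) :
    ∀ l k : Fin m, (l : ℕ) ≤ (k : ℕ) → a l ≤ a k := by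
  have key : ∀ (kv : ℕ) (hkv : kv < m) (l : Fin m), (l : ℕ) ≤ kv → a l ≤ a ⟨kv, hkv⟩ := by
    intro kv
    induction kv with
    | zero =>
      intro hkv l h
      have hl0 : l = ⟨0, hkv⟩ := Fin.ext (show (l : ℕ) = 0 by omega)
      rw [hl0]
    | succ kv ih =>
      intro hkv l h
      rcases Nat.lt_or_ge (l : ℕ) (kv + 1) with hl | hl
      · exact le_trans (ih (by omega) l (by omega)) (hs kv hkv)
      · have hl1 : l = ⟨kv + 1, hkv⟩ := Fin.ext (show (l : ℕ) = kv + 1 by omega)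
        rw [hl1]
  intro l k h
  have hres := key (k : ℕ) k.isLt l h
  have hk : (⟨(k : ℕ), k.isLt⟩ : Fin m) = k := Fin.ext rfl
  rwa [hk] at hres

private lemma perm_pigeon {m : ℕ} (σ : Equiv.Perm (Fin m)) (k : Fin m) :
    ∃ l : Fin m, (l : ℕ) ≤ (k : ℕ) ∧ (k : ℕ) ≤ (σ l : ℕ) := by
  by_contra h
  push_neg at h
  have hsub : (Finset.Iic k).image σ ⊆ Finset.Iio k := by
    intro x hx
    simp only [Finset.mem_image, Finset.mem_Iic] at hx
    obtain ⟨l, hl, rfl⟩ := hx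
    simp only [Finset.mem_Iio]
    exact Fin.lt_def.mpr (h l (Fin.le_def.mp hl))
  have h1 : (Finset.Iic k).card ≤ (Finset.Iio k).card :=
    le_trans (le_of_eq (Finset.card_image_of_injective _ σ.injective).symm)
      (Finset.card_le_card hsub)
  rw [Fin.card_Iic, Fin.card_Iio] at h1
  omega

private lemma perm_eq_id_of_le {m : ℕ} (σ : Equiv.Perm (Fin m))
    (h : ∀ j : Fin m, (σ j : ℕ) ≤ (j : ℕ)) : ∀ j, σ j = j := by
  have hsum : ∑ j : Fin m, ((σ j : ℕ)) = ∑ j : Fin m, (j : ℕ) :=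
    Equiv.sum_comp σ (fun j => (j : ℕ))
  have := (Finset.sum_eq_sum_iff_of_le (fun i _ => h i)).mp hsum
  intro j
  exact Fin.ext (this j (Finset.mem_univ j))

private lemma perm_eq_id_of_ge {m : ℕ} (σ : Equiv.Perm (Fin m))
    (h : ∀ j : Fin m, (j : ℕ) ≤ (σ j : ℕ)) : ∀ j, σ j = j := by
  have hinv : ∀ j, σ.symm j = j := by
    apply perm_eq_id_of_le
    intro j
    have := h (σ.symm j)
    rwa [Equiv.apply_symm_apply] at this
  intro j
  conv_lhs => rw [← hinv j]
  exact Equiv.apply_symm_apply σ j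
/-- In any solution of the two-group instance `Φ'` with makespan `m + 2`, and
likewise in any solution of `Φ'` with total arrival time `(n + m)(m + 2)`,
the clause robot starting at `v_{c_j}` ends at the goal vertex `v_{c_j}^g`
and takes exactly `m + 2` time steps to reach it, for every `1 ≤ j ≤ m`:
minimum-time solutions of the two-group instance induce the same
robot-to-goal correspondence as the fully labeled instance. -/
theorem twoGroup_optimal_forces_labeled_goals {n m : ℕ} (hm : 0 < m)
    (sat : ThreeSat n m) (p : Fin n ⊕ Fin m → ℕ → PhiV n m)
    (g : Fin n ⊕ Fin m → PhiV n m) (hsol : TwoGroupSolution sat p g)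
    (hopt : makespan g p = m + 2 ∨ totalTime g p = (n + m) * (m + 2)) :
    ∀ j : Fin m, g (Sum.inr j) = PhiV.vcg j ∧
      arrivalTime (g (Sum.inr j)) (p (Sum.inr j)) = m + 2 := by
  obtain ⟨⟨φ, ψ, rfl⟩, hfeas, hpair⟩ := hsol
  -- feasibility for each group of robots
  have hfc : ∀ j : Fin m,
      FeasiblePath (phiGraph sat) (PhiV.vc j) (PhiV.vcg (ψ j)) (p (Sum.inr j)) := by
    intro j; simpa [phiStart] using hfeas (Sum.inr j)
  have hfv : ∀ i : Fin n,
      FeasiblePath (phiGraph sat) (PhiV.vx i) (PhiV.vxg (φ i)) (p (Sum.inl i)) := by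
    intro i; simpa [phiStart] using hfeas (Sum.inl i)
  -- potential lower bounds
  have hlbc : ∀ j : Fin m,
      m + 2 + (j : ℕ) ≤ (ψ j : ℕ) + arrivalTime (PhiV.vcg (ψ j)) (p (Sum.inr j)) := by
    intro j
    have hA := arrival_mem (hfc j).2.1
    have hp := (pot_path sat (hfc j) (arrivalTime (PhiV.vcg (ψ j)) (p (Sum.inr j)))).2
    rw [hA, (hfc j).1] at hp
    simpa [pot] using hp
  have hlbv : ∀ i : Fin n,
      m + 2 ≤ arrivalTime (PhiV.vxg (φ i)) (p (Sum.inl i)) := by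
    intro i
    have hA := arrival_mem (hfv i).2.1
    have hp := (pot_path sat (hfv i) (arrivalTime (PhiV.vxg (φ i)) (p (Sum.inl i)))).1
    rw [hA, (hfv i).1] at hp
    simp only [pot] at hp
    omega
  -- it suffices to show ψ = id and that every clause arrival time is m + 2
  suffices h : (∀ j : Fin m, ψ j = j) ∧
      (∀ j : Fin m, arrivalTime (PhiV.vcg (ψ j)) (p (Sum.inr j)) = m + 2) by
    intro j
    constructor
    · simp [h.1 j]
    · simpa using h.2 j
  rcases hopt with hopt | hopt
  · -- makespan case
    have hub : ∀ j : Fin m, arrivalTime (PhiV.vcg (ψ j)) (p (Sum.inr j)) ≤ m + 2 := by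
      intro j
      rw [← hopt]
      exact Finset.le_sup (f := fun r =>
        arrivalTime ((Sum.elim (fun i => PhiV.vxg (φ i)) fun j => PhiV.vcg (ψ j)) r) (p r))
        (Finset.mem_univ (Sum.inr j))
    have hge : ∀ j : Fin m, (j : ℕ) ≤ (ψ j : ℕ) := by
      intro j
      have h1 := hlbc j
      have h2 := hub j
      omega
    have hpsi : ∀ j : Fin m, ψ j = j := perm_eq_id_of_ge ψ hge
    refine ⟨hpsi, fun j => ?_⟩
    have h1 := hlbc j
    have h2 := hub j
    have h3 : (ψ j : ℕ) = (j : ℕ) := by rw [hpsi j]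
    omega
  · -- total arrival time case
    set a : Fin m → ℕ :=
      fun k => arrivalTime (PhiV.vcg k) (p (Sum.inr (ψ.symm k))) with ha
    have hfa : ∀ k : Fin m, FeasiblePath (phiGraph sat)
        (PhiV.vc (ψ.symm k)) (PhiV.vcg k) (p (Sum.inr (ψ.symm k))) := by
      intro k
      have := hfc (ψ.symm k)
      rwa [Equiv.apply_symm_apply] at this
    -- chain monotonicity
    have hstep : ∀ (kv : ℕ) (h : kv + 1 < m), a ⟨kv, by omega⟩ ≤ a ⟨kv + 1, h⟩ := by
      intro kv h
      have hne : (Sum.inr (ψ.symm ⟨kv, by omega⟩) : Fin n ⊕ Fin m) ≠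
          Sum.inr (ψ.symm ⟨kv + 1, h⟩) := by
        intro hcon
        have := ψ.symm.injective (Sum.inr.inj hcon)
        have := Fin.mk.injEq kv (by omega : kv < m) (kv + 1) h ▸ this
        simp [Fin.mk.injEq] at this
      exact chain_step sat (hfa ⟨kv, by omega⟩) (hfa ⟨kv + 1, h⟩) rfl (hpair hne)
    have hmono := mono_of_step a hstep
    -- lower bound on a
    have halb : ∀ k : Fin m, m + 2 + ((ψ.symm k : ℕ)) ≤ a k + (k : ℕ) := by
      intro k
      have h1 := hlbc (ψ.symm k)
      rw [Equiv.apply_symm_apply] at h1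
      show m + 2 + ((ψ.symm k : ℕ)) ≤
        arrivalTime (PhiV.vcg k) (p (Sum.inr (ψ.symm k))) + (k : ℕ)
      omega
    have hge : ∀ k : Fin m, m + 2 ≤ a k := by
      intro k
      obtain ⟨l, hlk, hkl⟩ := perm_pigeon ψ.symm k
      have h1 := halb l
      have h2 := hmono l k hlk
      omega
    -- each robot's arrival time is at least m + 2
    have hlb : ∀ r : Fin n ⊕ Fin m, m + 2 ≤ arrivalTime
        ((Sum.elim (fun i => PhiV.vxg (φ i)) fun j => PhiV.vcg (ψ j)) r) (p r) := by
      intro r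
      cases r with
      | inl i => simpa using hlbv i
      | inr j =>
        have := hge (ψ j)
        rw [ha] at this
        simpa [Equiv.symm_apply_apply] using this
    -- sum equality forces all arrival times to be m + 2
    have hall : ∀ r : Fin n ⊕ Fin m, arrivalTime
        ((Sum.elim (fun i => PhiV.vxg (φ i)) fun j => PhiV.vcg (ψ j)) r) (p r) = m + 2 := by
      have hcard : ∑ _r : Fin n ⊕ Fin m, (m + 2) = (n + m) * (m + 2) := by
        simp only [Finset.sum_const, Finset.card_univ, Fintype.card_sum,
          Fintype.card_fin, smul_eq_mul]
      have hsum : ∑ r : Fin n ⊕ Fin m, (m + 2) = ∑ r : Fin n ⊕ Fin m, arrivalTime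
          ((Sum.elim (fun i => PhiV.vxg (φ i)) fun j => PhiV.vcg (ψ j)) r) (p r) := by
        rw [hcard, ← hopt]
        rfl
      have := (Finset.sum_eq_sum_iff_of_le (fun r _ => hlb r)).mp hsum
      intro r
      exact (this r (Finset.mem_univ r)).symm
    have harr : ∀ j : Fin m, arrivalTime (PhiV.vcg (ψ j)) (p (Sum.inr j)) = m + 2 := by
      intro j
      simpa using hall (Sum.inr j)
    -- deduce ψ = id
    have hle : ∀ k : Fin m, (ψ.symm k : ℕ) ≤ (k : ℕ) := by
      intro k
      have h1 := halb k
      have h2 : a k = m + 2 := by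
        have := harr (ψ.symm k)
        rw [Equiv.apply_symm_apply] at this
        exact this
      omega
    have hpsiinv : ∀ k : Fin m, ψ.symm k = k := perm_eq_id_of_le ψ.symm hle
    have hpsi : ∀ j : Fin m, ψ j = j := by
      intro j
      conv_lhs => rw [← hpsiinv j]
      exact Equiv.apply_symm_apply ψ j
    exact ⟨hpsi, harr⟩

end MPPFormal
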